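/- Let X be an M-set, A ⊆ ω co-infinite, A' ⊆ A, and x ∈ X supported on A. If for some f ∈ M the element f.x is supported on f(A'), then x is supported on A'. -/
import Mathlib


/-- The monoid of injective self-maps of ω (modelled as ℕ), under composition. -/
def M : Submonoid (Function.End ℕ) where
  carrier := {f | Function.Injective f}
  mul_mem' := fun hf hg => hf.comp hg
  one_mem' := fun _ _ h => h

/-- `x` is supported on `A` if it is fixed by every injection fixing `A` pointwise. -/
def Supported {X : Type*} [MulAction M X] (A : Set ℕ) (x : X) : Prop :=
  ∀ u : M, (∀ a ∈ A, u.1 a = a) → u • x = x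

/-- Given an injection `f` and a set `A` with both `Aᶜ` and `(f '' A)ᶜ` infinite,
there is a bijection of `ℕ` sending `f a` back to `a` for every `a ∈ A`. -/
lemma exists_retraction_equiv (A : Set ℕ) (hA : (Aᶜ : Set ℕ).Infinite)
    (f : ℕ → ℕ) (hf : Function.Injective f) :
    ∃ r : ℕ ≃ ℕ, ∀ a ∈ A, r (f a) = a := by
  have hfAc : ((f '' A)ᶜ : Set ℕ).Infinite := by
    have h1 : (f '' Aᶜ : Set ℕ).Infinite := hA.image (hf.injOn)
    refine h1.mono ?_
    rintro y ⟨a, haA, rfl⟩ ⟨b, hbA, hba⟩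
    exact haA (hf hba ▸ hbA)
  have hcA : Infinite (Aᶜ : Set ℕ) := hA.to_subtype
  have hcfA : Infinite ((f '' A)ᶜ : Set ℕ) := hfAc.to_subtype
  obtain ⟨ec⟩ : Nonempty (((f '' A)ᶜ : Set ℕ) ≃ (Aᶜ : Set ℕ)) :=
    nonempty_equiv_of_countable
  classical
  set e0 : (A : Set ℕ) ≃ (f '' A : Set ℕ) := Equiv.Set.image f A hf with he0
  refine ⟨((Equiv.Set.sumCompl (f '' A)).symm.trans
      ((Equiv.sumCongr e0.symm ec).trans (Equiv.Set.sumCompl A))), ?_⟩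
  intro a ha
  have hmem : f a ∈ f '' A := ⟨a, ha, rfl⟩
  simp only [Equiv.trans_apply]
  rw [Equiv.Set.sumCompl_symm_apply_of_mem hmem]
  have h0 : e0.symm ⟨f a, hmem⟩ = ⟨a, ha⟩ := by
    rw [he0]; exact Equiv.Set.image_symm_apply f A hf a hmem
  simp [h0]

theorem stmt_2 {X : Type*} [MulAction M X] (A A' : Set ℕ) (hA : (Aᶜ : Set ℕ).Infinite)
    (hA' : A' ⊆ A) (x : X) (hx : Supported A x) (f : M)
    (h : Supported (f.1 '' A') (f • x)) :
    Supported A' x := by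
  intro u hu
  obtain ⟨r, hr⟩ := exists_retraction_equiv A hA f.1 f.2
  set R : M := ⟨(r : ℕ → ℕ), r.injective⟩ with hR
  set V : M := ⟨(r.symm : ℕ → ℕ) ∘ u.1 ∘ (r : ℕ → ℕ),
    r.symm.injective.comp (u.2.comp r.injective)⟩ with hV
  -- x = (R * f) • x
  have h1 : (R * f) • x = x := hx (R * f) (fun a ha => hr a ha)
  -- V fixes f '' A' pointwise
  have h2 : V • (f • x) = f • x := by
    apply h
    rintro b ⟨a, ha, rfl⟩
    have haA : a ∈ A := hA' ha
    have hrfa : r (f.1 a) = a := hr a haA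
    have hsymm : r.symm a = f.1 a := by
      conv_lhs => rw [← hrfa]
      exact r.symm_apply_apply _
    show r.symm (u.1 (r (f.1 a))) = f.1 a
    rw [hrfa, hu a ha, hsymm]
  -- u * R = R * V in M
  have h3 : u * R = R * V := by
    apply Subtype.ext
    funext n
    show u.1 (r n) = r (r.symm (u.1 (r n)))
    rw [r.apply_symm_apply]
  calc u • x = u • ((R * f) • x) := by rw [h1]
    _ = (u * R * f) • x := by rw [mul_smul, mul_smul, mul_smul]
    _ = (R * V * f) • x := by rw [h3]
    _ = R • (V • (f • x)) := by rw [mul_smul, mul_smul]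
    _ = R • (f • x) := by rw [h2]
    _ = (R * f) • x := by rw [mul_smul]
    _ = x := h1
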